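/- Let u(t) = Σ_{i=1}^N (λ_i/2)/(t−z_i) − Σ_{j=1}^m 1/(t−w_j) with all points distinct, and suppose the sl_2 Bethe equations hold. Then v(t) = u(t)² − u'(t) has the partial fraction form v(t) = Σ_{i=1}^N [λ_i(λ_i+2)/4]/(t−z_i)² + Σ_{i=1}^N c_i/(t−z_i), where c_i = λ_i ( Σ_{j≠i} (λ_j/2)/(z_i−z_j) − Σ_{j=1}^m 1/(z_i−w_j) ). -/

import Mathlib

open Topology Filter

private lemma mySwap {n : ℕ} (f : Fin n → Fin n → ℂ) :
    ∑ i, ∑ j ∈ Finset.univ.erase i, f j i = ∑ i, ∑ j ∈ Finset.univ.erase i, f i j := by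
  have key : ∀ g : Fin n → Fin n → ℂ,
      (∑ i, ∑ j ∈ Finset.univ.erase i, g i j)
        = ∑ i, ∑ j, if j = i then 0 else g i j := by
    intro g
    refine Finset.sum_congr rfl fun i _ => ?_
    rw [show (∑ j ∈ Finset.univ.erase i, g i j)
        = ∑ j ∈ Finset.univ.erase i, (if j = i then 0 else g i j) from
      Finset.sum_congr rfl fun j hj => (if_neg (Finset.mem_erase.1 hj).1).symm]
    exact Finset.sum_erase _ (if_pos rfl)
  refine ((key fun a b => f b a).trans ?_).trans (key f).symm
  rw [Finset.sum_comm]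
  refine Finset.sum_congr rfl fun i _ => Finset.sum_congr rfl fun j _ => ?_
  by_cases h : i = j
  · simp [h]
  · simp [h, Ne.symm h]

private lemma mySplit (t a b c d : ℂ) (hab : a ≠ b) (hta : t - a ≠ 0) (htb : t - b ≠ 0) :
    c / (t - a) * (d / (t - b))
      = c * d / (a - b) / (t - a) + d * c / (b - a) / (t - b) := by
  have h1 : a - b ≠ 0 := sub_ne_zero.2 hab
  have h2 : b - a ≠ 0 := sub_ne_zero.2 hab.symm
  field_simp
  ring

/-- If the `sl₂` Bethe Ansatz equations hold, then
`v = u² − u'` with `u(t) = Σᵢ (λᵢ/2)/(t−zᵢ) − Σⱼ 1/(t−wⱼ)` has the partial fraction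
form `v(t) = Σᵢ [λᵢ(λᵢ+2)/4]/(t−zᵢ)² + Σᵢ cᵢ/(t−zᵢ)` with
`cᵢ = λᵢ (Σ_{j≠i} (λⱼ/2)/(zᵢ−zⱼ) − Σⱼ 1/(zᵢ−wⱼ))`. -/
theorem miura_partial_fractions (N m : ℕ) (lam : Fin N → ℂ) (z : Fin N → ℂ)
    (w : Fin m → ℂ) (hz : Function.Injective z) (hw : Function.Injective w)
    (hzw : ∀ i j, z i ≠ w j)
    (u v : ℂ → ℂ)
    (hu : u = fun t => (∑ i, lam i / 2 / (t - z i)) - ∑ j, 1 / (t - w j))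
    (hv : v = fun t => u t ^ 2 - deriv u t)
    (hbethe : ∀ j, (∑ i, lam i / (w j - z i))
        = ∑ s ∈ Finset.univ.erase j, 2 / (w j - w s))
    (c : Fin N → ℂ)
    (hc : ∀ i, c i = lam i *
        ((∑ j ∈ Finset.univ.erase i, lam j / 2 / (z i - z j)) - ∑ j, 1 / (z i - w j))) :
    ∀ t : ℂ, (∀ i, t ≠ z i) → (∀ j, t ≠ w j) →
      v t = (∑ i, lam i * (lam i + 2) / 4 / (t - z i) ^ 2) + ∑ i, c i / (t - z i) := by
  intro t htz htw
  have hz' : ∀ i, t - z i ≠ 0 := fun i => sub_ne_zero.2 (htz i)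
  have hw' : ∀ j, t - w j ≠ 0 := fun j => sub_ne_zero.2 (htw j)
  have hzz : ∀ i j : Fin N, j ≠ i → z i ≠ z j := fun i j hij h => hij (hz h).symm
  have hww : ∀ j s : Fin m, s ≠ j → w j ≠ w s := fun j s hsj h => hsj (hw h).symm
  -- the derivative of u at t
  have hAi : ∀ i : Fin N,
      HasDerivAt (fun y => lam i / 2 / (y - z i)) (-(lam i / 2 / (t - z i) ^ 2)) t := by
    intro i
    have h := (((hasDerivAt_id t).sub_const (z i)).inv (hz' i)).const_mul (lam i / 2)
    have hfun : (fun y : ℂ => lam i / 2 / (y - z i)) = fun y => lam i / 2 * (y - z i)⁻¹ := by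
      funext y; rw [div_eq_mul_inv]
    have hval : -(lam i / 2 / (t - z i) ^ 2) = lam i / 2 * (-1 / (t - z i) ^ 2) := by ring
    rw [hfun, hval]
    exact h
  have hBj : ∀ j : Fin m,
      HasDerivAt (fun y => 1 / (y - w j)) (-(1 / (t - w j) ^ 2)) t := by
    intro j
    have h := ((hasDerivAt_id t).sub_const (w j)).inv (hw' j)
    have hfun : (fun y : ℂ => 1 / (y - w j)) = fun y => (y - w j)⁻¹ := by
      funext y; rw [one_div]
    have hval : -(1 / (t - w j) ^ 2) = -1 / (t - w j) ^ 2 := by ring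
    rw [hfun, hval]
    exact h
  have hdu : HasDerivAt u
      ((∑ i, -(lam i / 2 / (t - z i) ^ 2)) - ∑ j, -(1 / (t - w j) ^ 2)) t := by
    rw [hu]
    exact (HasDerivAt.fun_sum fun i _ => hAi i).sub (HasDerivAt.fun_sum fun j _ => hBj j)
  have hderiv : deriv u t
      = (∑ i, -(lam i / 2 / (t - z i) ^ 2)) - ∑ j, -(1 / (t - w j) ^ 2) := hdu.deriv
  simp only [hv]
  rw [hderiv]
  simp only [hu, hc]
  -- expand the square
  have hPP : (∑ i, lam i / 2 / (t - z i)) * (∑ i, lam i / 2 / (t - z i))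
      = (∑ i, ∑ j ∈ Finset.univ.erase i, (lam i / 2 / (t - z i)) * (lam j / 2 / (t - z j)))
        + ∑ i, (lam i / 2 / (t - z i)) * (lam i / 2 / (t - z i)) := by
    rw [Finset.sum_mul_sum, ← Finset.sum_add_distrib]
    exact Finset.sum_congr rfl fun i _ => (Finset.sum_erase_add _ _ (Finset.mem_univ i)).symm
  have hQQ : (∑ j, 1 / (t - w j)) * (∑ j, 1 / (t - w j))
      = (∑ j, ∑ s ∈ Finset.univ.erase j, (1 / (t - w j)) * (1 / (t - w s)))
        + ∑ j, (1 / (t - w j)) * (1 / (t - w j)) := by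
    rw [Finset.sum_mul_sum, ← Finset.sum_add_distrib]
    exact Finset.sum_congr rfl fun j _ => (Finset.sum_erase_add _ _ (Finset.mem_univ j)).symm
  -- cross terms
  have hCross : 2 * ((∑ i, lam i / 2 / (t - z i)) * (∑ j, 1 / (t - w j)))
      = (∑ i, lam i * (∑ j, 1 / (z i - w j)) / (t - z i))
        + ∑ j, (∑ i, lam i / (w j - z i)) / (t - w j) := by
    rw [Finset.sum_mul_sum]
    calc 2 * ∑ i, ∑ j, (lam i / 2 / (t - z i)) * (1 / (t - w j))
        = ∑ i, ∑ j, (lam i * (1 / (z i - w j)) / (t - z i)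
            + lam i / (w j - z i) / (t - w j)) := by
          rw [Finset.mul_sum]
          refine Finset.sum_congr rfl fun i _ => ?_
          rw [Finset.mul_sum]
          refine Finset.sum_congr rfl fun j _ => ?_
          rw [mySplit t (z i) (w j) (lam i / 2) 1 (hzw i j) (hz' i) (hw' j)]
          ring
      _ = (∑ i, ∑ j, lam i * (1 / (z i - w j)) / (t - z i))
            + ∑ i, ∑ j, lam i / (w j - z i) / (t - w j) := by
          simp only [Finset.sum_add_distrib]
      _ = (∑ i, lam i * (∑ j, 1 / (z i - w j)) / (t - z i))
            + ∑ j, (∑ i, lam i / (w j - z i)) / (t - w j) := by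
          congr 1
          · exact Finset.sum_congr rfl fun i _ => by
              rw [← Finset.sum_div, ← Finset.mul_sum]
          · rw [Finset.sum_comm]
            exact Finset.sum_congr rfl fun j _ => by rw [← Finset.sum_div]
  -- z-z off-diagonal terms
  have hS1 : (∑ i, ∑ j ∈ Finset.univ.erase i, (lam i / 2 / (t - z i)) * (lam j / 2 / (t - z j)))
      = ∑ i, lam i * (∑ j ∈ Finset.univ.erase i, lam j / 2 / (z i - z j)) / (t - z i) := by
    calc (∑ i, ∑ j ∈ Finset.univ.erase i, (lam i / 2 / (t - z i)) * (lam j / 2 / (t - z j)))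
        = ∑ i, ∑ j ∈ Finset.univ.erase i,
            ((lam i / 2) * (lam j / 2) / (z i - z j) / (t - z i)
              + (lam j / 2) * (lam i / 2) / (z j - z i) / (t - z j)) := by
          refine Finset.sum_congr rfl fun i _ => Finset.sum_congr rfl fun j hj => ?_
          exact mySplit t (z i) (z j) _ _ (hzz i j (Finset.mem_erase.1 hj).1) (hz' i) (hz' j)
      _ = (∑ i, ∑ j ∈ Finset.univ.erase i,
              (lam i / 2) * (lam j / 2) / (z i - z j) / (t - z i))
            + ∑ i, ∑ j ∈ Finset.univ.erase i,
              (lam j / 2) * (lam i / 2) / (z j - z i) / (t - z j) := by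
          simp only [Finset.sum_add_distrib]
      _ = (∑ i, ∑ j ∈ Finset.univ.erase i,
              (lam i / 2) * (lam j / 2) / (z i - z j) / (t - z i))
            + ∑ i, ∑ j ∈ Finset.univ.erase i,
              (lam i / 2) * (lam j / 2) / (z i - z j) / (t - z i) := by
          congr 1
          exact mySwap (fun a b => (lam a / 2) * (lam b / 2) / (z a - z b) / (t - z a))
      _ = ∑ i, lam i * (∑ j ∈ Finset.univ.erase i, lam j / 2 / (z i - z j)) / (t - z i) := by
          rw [← Finset.sum_add_distrib]
          refine Finset.sum_congr rfl fun i _ => ?_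
          rw [Finset.mul_sum, Finset.sum_div, ← Finset.sum_add_distrib]
          exact Finset.sum_congr rfl fun j _ => by ring
  -- w-w off-diagonal terms
  have hS3 : (∑ j, ∑ s ∈ Finset.univ.erase j, (1 / (t - w j)) * (1 / (t - w s)))
      = ∑ j, (∑ s ∈ Finset.univ.erase j, 2 / (w j - w s)) / (t - w j) := by
    calc (∑ j, ∑ s ∈ Finset.univ.erase j, (1 / (t - w j)) * (1 / (t - w s)))
        = ∑ j, ∑ s ∈ Finset.univ.erase j,
            ((1 : ℂ) * 1 / (w j - w s) / (t - w j) + 1 * 1 / (w s - w j) / (t - w s)) := by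
          refine Finset.sum_congr rfl fun j _ => Finset.sum_congr rfl fun s hs => ?_
          exact mySplit t (w j) (w s) 1 1 (hww j s (Finset.mem_erase.1 hs).1) (hw' j) (hw' s)
      _ = (∑ j, ∑ s ∈ Finset.univ.erase j, (1 : ℂ) * 1 / (w j - w s) / (t - w j))
            + ∑ j, ∑ s ∈ Finset.univ.erase j, (1 : ℂ) * 1 / (w s - w j) / (t - w s) := by
          simp only [Finset.sum_add_distrib]
      _ = (∑ j, ∑ s ∈ Finset.univ.erase j, (1 : ℂ) * 1 / (w j - w s) / (t - w j))
            + ∑ j, ∑ s ∈ Finset.univ.erase j, (1 : ℂ) * 1 / (w j - w s) / (t - w j) := by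
          congr 1
          exact mySwap (fun a b => (1 : ℂ) * 1 / (w a - w b) / (t - w a))
      _ = ∑ j, (∑ s ∈ Finset.univ.erase j, 2 / (w j - w s)) / (t - w j) := by
          rw [← Finset.sum_add_distrib]
          refine Finset.sum_congr rfl fun j _ => ?_
          rw [Finset.sum_div, ← Finset.sum_add_distrib]
          exact Finset.sum_congr rfl fun s _ => by ring
  -- Bethe equations kill the residues at the w's
  have hBethe0 : (∑ j, (∑ s ∈ Finset.univ.erase j, 2 / (w j - w s)) / (t - w j))
      = ∑ j, (∑ i, lam i / (w j - z i)) / (t - w j) :=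
    Finset.sum_congr rfl fun j _ => by rw [hbethe j]
  -- diagonal terms
  have hD : (∑ i, (lam i / 2 / (t - z i)) * (lam i / 2 / (t - z i)))
        - (∑ i, -(lam i / 2 / (t - z i) ^ 2))
      = ∑ i, lam i * (lam i + 2) / 4 / (t - z i) ^ 2 := by
    rw [← Finset.sum_sub_distrib]
    refine Finset.sum_congr rfl fun i _ => ?_
    have h := hz' i
    field_simp
    ring
  have hE : (∑ j, (1 / (t - w j)) * (1 / (t - w j))) + (∑ j, -(1 / (t - w j) ^ 2)) = 0 := by
    rw [← Finset.sum_add_distrib]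
    apply Finset.sum_eq_zero
    intro j _
    have h := hw' j
    field_simp
    ring
  have hfinal : (∑ i, lam i * ((∑ j ∈ Finset.univ.erase i, lam j / 2 / (z i - z j))
          - ∑ j, 1 / (z i - w j)) / (t - z i))
      = (∑ i, lam i * (∑ j ∈ Finset.univ.erase i, lam j / 2 / (z i - z j)) / (t - z i))
        - ∑ i, lam i * (∑ j, 1 / (z i - w j)) / (t - z i) := by
    rw [← Finset.sum_sub_distrib]
    exact Finset.sum_congr rfl fun i _ => by ring
  linear_combination hPP + hQQ - hCross + hS1 + hS3 + hBethe0 + hD + hE - hfinal
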